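/- Let n ≥ 1, d = 2^n, and let α : 𝒫ₙ → {−1, +1} satisfy Σ_{P∈𝒫ₙ} α(P) = 0. Let 0 ≤ ε ≤ 1/4 and define p(P) = (1 + 4 α(P) ε)/d² for P ∈ 𝒫ₙ. Then for every density matrix ρ on ℂ^d and every unit vector φ ∈ ℂ^d, | d · Σ_{P∈𝒫ₙ} p(P) ⟨φ| P ρ P |φ⟩ − 1 | ≤ 4ε. -/

import Mathlib

open scoped Classical Matrix ComplexOrder

/-- The four single-qubit Pauli matrices `I, X, Y, Z`. -/
noncomputable def pauli1 : Fin 4 → Matrix (Fin 2) (Fin 2) ℂ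
  | 0 => !![1, 0; 0, 1]
  | 1 => !![0, 1; 1, 0]
  | 2 => !![0, -Complex.I; Complex.I, 0]
  | 3 => !![1, 0; 0, -1]

/-- The `n`-qubit Pauli operator `P_{f 0} ⊗ ⋯ ⊗ P_{f (n-1)}`, as a matrix indexed by
`Fin n → Fin 2` (a type of cardinality `d = 2^n`). -/
noncomputable def PauliOp (n : ℕ) (f : Fin n → Fin 4) :
    Matrix (Fin n → Fin 2) (Fin n → Fin 2) ℂ :=
  Matrix.of fun s t => ∏ i, pauli1 (f i) (s i) (t i)

lemma pauli1_sum (s t u v : Fin 2) :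
    ∑ a : Fin 4, pauli1 a s u * pauli1 a v t
      = 2 * (if s = t then 1 else 0) * (if u = v then 1 else 0) := by
  fin_cases s <;> fin_cases t <;> fin_cases u <;> fin_cases v <;>
    simp [pauli1, Fin.sum_univ_four, Complex.I_mul_I] <;> ring_nf

lemma pauli1_herm (a : Fin 4) (s t : Fin 2) :
    (starRingEnd ℂ) (pauli1 a t s) = pauli1 a s t := by
  fin_cases a <;> fin_cases s <;> fin_cases t <;> simp [pauli1]

lemma pauliOp_herm (n : ℕ) (f : Fin n → Fin 4) : (PauliOp n f)ᴴ = PauliOp n f := by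
  ext s t
  simp [PauliOp, Matrix.conjTranspose_apply, map_prod, pauli1_herm]

lemma prod_delta {n : ℕ} (s t : Fin n → Fin 2) :
    (∏ i, (if s i = t i then (1:ℂ) else 0)) = if s = t then 1 else 0 := by
  by_cases h : s = t
  · subst h; simp
  · rw [if_neg h]
    obtain ⟨i, hi⟩ := Function.ne_iff.mp h
    exact Finset.prod_eq_zero (Finset.mem_univ i) (by simp [hi])

lemma pauli_key {n : ℕ} (s t u v : Fin n → Fin 2) :
    ∑ f : Fin n → Fin 4,
        (∏ i, pauli1 (f i) (s i) (u i)) * ∏ i, pauli1 (f i) (v i) (t i)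
      = (2 ^ n : ℂ) * (if s = t then 1 else 0) * (if u = v then 1 else 0) := by
  have h1 : ∀ f : Fin n → Fin 4,
      (∏ i, pauli1 (f i) (s i) (u i)) * ∏ i, pauli1 (f i) (v i) (t i)
        = ∏ i, (pauli1 (f i) (s i) (u i) * pauli1 (f i) (v i) (t i)) := fun f =>
    (Finset.prod_mul_distrib).symm
  simp_rw [h1]
  rw [← Fintype.prod_sum (fun i a => pauli1 a (s i) (u i) * pauli1 a (v i) (t i))]
  simp_rw [pauli1_sum]
  rw [Finset.prod_mul_distrib, Finset.prod_mul_distrib, Finset.prod_const,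
    prod_delta, prod_delta]
  simp

/-- The Pauli twirl identity: `∑_P P ρ P = d (tr ρ) I`. -/
lemma twirl {n : ℕ} (ρ : Matrix (Fin n → Fin 2) (Fin n → Fin 2) ℂ) :
    ∑ f : Fin n → Fin 4, PauliOp n f * ρ * PauliOp n f
      = ((2 ^ n : ℂ) * ρ.trace) • 1 := by
  ext s t
  simp only [Matrix.sum_apply, Matrix.mul_apply, PauliOp, Matrix.of_apply,
    Finset.sum_mul]
  rw [Finset.sum_comm]
  have : ∀ v, ∑ f : Fin n → Fin 4, ∑ u,
      ((∏ i, pauli1 (f i) (s i) (u i)) * ρ u v) * ∏ i, pauli1 (f i) (v i) (t i)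
      = ∑ u, ρ u v * ((2 ^ n : ℂ) * (if s = t then 1 else 0) * (if u = v then 1 else 0)) := by
    intro v
    rw [Finset.sum_comm]
    refine Finset.sum_congr rfl fun u _ => ?_
    rw [← pauli_key s t u v, Finset.mul_sum]
    exact Finset.sum_congr rfl fun f _ => by ring
  simp_rw [this]
  simp only [mul_ite, mul_one, mul_zero, Finset.sum_ite_eq, Finset.mem_univ, if_true]
  rw [Matrix.smul_apply, Matrix.one_apply, Matrix.trace]
  by_cases h : s = t <;> simp [h, Matrix.diag, Finset.mul_sum, mul_comm]

/-- for signs `α` summing to `0`, `0 ≤ ε ≤ 1/4`,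
`p(P) = (1 + 4 α(P) ε)/d²`, a density matrix `ρ` and a unit vector `φ`,
`|d ∑_P p(P) ⟨φ|PρP|φ⟩ − 1| ≤ 4ε`. -/
theorem stmt_2 (n : ℕ) (hn : 1 ≤ n) (α : (Fin n → Fin 4) → ℝ)
    (hα : ∀ P, α P = 1 ∨ α P = -1) (hαsum : ∑ P : Fin n → Fin 4, α P = 0)
    (ε : ℝ) (hε : 0 ≤ ε) (hε' : ε ≤ 1 / 4)
    (ρ : Matrix (Fin n → Fin 2) (Fin n → Fin 2) ℂ) (hρ : ρ.PosSemidef) (hρt : ρ.trace = 1)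
    (φ : (Fin n → Fin 2) → ℂ) (hφ : star φ ⬝ᵥ φ = 1) :
    ‖(2 ^ n : ℂ) *
        (∑ P : Fin n → Fin 4, (((1 + 4 * α P * ε) / (2 ^ n : ℝ) ^ 2 : ℝ) : ℂ) *
          (star φ ⬝ᵥ (PauliOp n P * ρ * PauliOp n P).mulVec φ)) - 1‖ ≤ 4 * ε := by
  have hd0 : ((2:ℝ) ^ n) ≠ 0 := by positivity
  have hdc0 : ((2:ℂ) ^ n) ≠ 0 := by
    exact_mod_cast (by positivity : ((2:ℝ) ^ n) ≠ 0)
  -- positivity of each term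
  have hA : ∀ P : Fin n → Fin 4, (PauliOp n P * ρ * PauliOp n P).PosSemidef := by
    intro P
    have := hρ.mul_mul_conjTranspose_same (PauliOp n P)
    rwa [pauliOp_herm] at this
  set x : (Fin n → Fin 4) → ℝ :=
    fun P => (star φ ⬝ᵥ (PauliOp n P * ρ * PauliOp n P).mulVec φ).re with hxdef
  have hxc : ∀ P, star φ ⬝ᵥ (PauliOp n P * ρ * PauliOp n P).mulVec φ = (x P : ℂ) := by
    intro P
    have h0 := (hA P).dotProduct_mulVec_nonneg φ
    rw [Complex.le_def] at h0
    exact Complex.ext rfl (by simpa using h0.2.symm)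
  have hxnn : ∀ P, 0 ≤ x P := by
    intro P
    have h0 := (hA P).dotProduct_mulVec_nonneg φ
    rw [Complex.le_def] at h0
    simpa [hxdef] using h0.1
  -- sum of x over all P is 2^n
  have hsumc : ∑ P : Fin n → Fin 4, (x P : ℂ) = (2:ℂ) ^ n := by
    simp_rw [← hxc]
    have : ∑ P : Fin n → Fin 4, star φ ⬝ᵥ (PauliOp n P * ρ * PauliOp n P).mulVec φ
        = star φ ⬝ᵥ (∑ P : Fin n → Fin 4, PauliOp n P * ρ * PauliOp n P).mulVec φ := by
      simp only [Matrix.mulVec, dotProduct, Matrix.sum_apply, Finset.sum_mul,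
        Finset.mul_sum]
      rw [Finset.sum_comm]
      refine Finset.sum_congr rfl fun j _ => ?_
      rw [Finset.sum_comm]
    rw [this, twirl, hρt, mul_one]
    rw [Matrix.smul_mulVec, Matrix.one_mulVec, dotProduct_smul, hφ]
    simp
  have hsumr : ∑ P : Fin n → Fin 4, x P = (2:ℝ) ^ n := by
    have := hsumc
    push_cast at this
    exact_mod_cast this
  -- rewrite the LHS
  have key : (2 ^ n : ℂ) *
        (∑ P : Fin n → Fin 4, (((1 + 4 * α P * ε) / (2 ^ n : ℝ) ^ 2 : ℝ) : ℂ) *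
          (star φ ⬝ᵥ (PauliOp n P * ρ * PauliOp n P).mulVec φ)) - 1
      = ((4 * ε / 2 ^ n : ℝ) : ℂ) * ∑ P : Fin n → Fin 4, ((α P * x P : ℝ) : ℂ) := by
    simp_rw [hxc]
    have step : ∀ P : Fin n → Fin 4,
        (((1 + 4 * α P * ε) / (2 ^ n : ℝ) ^ 2 : ℝ) : ℂ) * (x P : ℂ)
          = (1 / ((2:ℂ) ^ n) ^ 2) * (x P : ℂ)
            + (((4 * ε / 2 ^ n : ℝ)) : ℂ) / (2:ℂ) ^ n * ((α P * x P : ℝ) : ℂ) := by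
      intro P
      push_cast
      field_simp
    rw [Finset.sum_congr rfl fun P _ => step P, Finset.sum_add_distrib,
      ← Finset.mul_sum, ← Finset.mul_sum, hsumc]
    field_simp
    ring
  rw [key, norm_mul, Complex.norm_real, Real.norm_eq_abs, ← Complex.ofReal_sum, Complex.norm_real,
    Real.norm_eq_abs]
  have h1 : |4 * ε / 2 ^ n| = 4 * ε / 2 ^ n := abs_of_nonneg (by positivity)
  have h2 : |∑ P : Fin n → Fin 4, α P * x P| ≤ (2:ℝ) ^ n := by
    calc |∑ P : Fin n → Fin 4, α P * x P| ≤ ∑ P : Fin n → Fin 4, |α P * x P| :=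
          Finset.abs_sum_le_sum_abs _ _
      _ = ∑ P : Fin n → Fin 4, x P := by
          refine Finset.sum_congr rfl fun P _ => ?_
          rw [abs_mul]
          rcases hα P with h | h <;> simp [h, abs_of_nonneg (hxnn P)]
      _ = (2:ℝ) ^ n := hsumr
  rw [h1]
  calc 4 * ε / 2 ^ n * |∑ P : Fin n → Fin 4, α P * x P|
      ≤ 4 * ε / 2 ^ n * 2 ^ n := by
        apply mul_le_mul_of_nonneg_left h2 (by positivity)
    _ = 4 * ε := by field_simp
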